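/- Let S be a right reversible compact semitopological semigroup acting separately continuously on a subset K of a locally convex space X, and let q be a continuous seminorm on X. Suppose the action is asymptotically q-nonexpansive: for all x, y ∈ K there exists a left ideal I_{xy} of S with q(s.x − s.y) ≤ q(x−y) for all s ∈ I_{xy}. Then the action is super asymptotically q-nonexpansive: for every x ∈ K and t ∈ S there exists a left ideal I of S such that q(st.x − st.y) ≤ q(x−y) for all s ∈ I and all y ∈ K. -/

import Mathlib

open scoped Topology

/-- for a right reversible compact semitopological semigroup acting
separately continuously on a subset `K` of a locally convex space, every
asymptotically `q`-nonexpansive action (for a continuous seminorm `q`) is super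
asymptotically `q`-nonexpansive. -/
theorem stmt6 {S X : Type*} [Semigroup S] [TopologicalSpace S] [T2Space S]
    [CompactSpace S]
    [AddCommGroup X] [Module ℝ X] [TopologicalSpace X]
    [IsTopologicalAddGroup X] [ContinuousSMul ℝ X] [LocallyConvexSpace ℝ X]
    (hlc : ∀ t : S, Continuous fun s : S => t * s)
    (hrc : ∀ t : S, Continuous fun s : S => s * t)
    (hrev : ∀ I J : Set S, I.Nonempty → J.Nonempty → IsClosed I → IsClosed J →
      (∀ s : S, ∀ x ∈ I, s * x ∈ I) → (∀ s : S, ∀ x ∈ J, s * x ∈ J) →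
      (I ∩ J).Nonempty)
    (K : Set X) (act : S → X → X)
    (hmaps : ∀ s : S, ∀ x ∈ K, act s x ∈ K)
    (haction : ∀ s t : S, ∀ x ∈ K, act (s * t) x = act s (act t x))
    (hc1 : ∀ x ∈ K, Continuous fun s : S => act s x)
    (hc2 : ∀ s : S, ContinuousOn (act s) K)
    (q : Seminorm ℝ X) (hqc : Continuous q)
    (hasym : ∀ x ∈ K, ∀ y ∈ K, ∃ I : Set S, I.Nonempty ∧
      (∀ s : S, ∀ a ∈ I, s * a ∈ I) ∧
      ∀ s ∈ I, q (act s x - act s y) ≤ q (x - y)) :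
    ∀ x ∈ K, ∀ t : S, ∃ I : Set S, I.Nonempty ∧
      (∀ s : S, ∀ a ∈ I, s * a ∈ I) ∧
      ∀ s ∈ I, ∀ y ∈ K, q (act (s * t) x - act (s * t) y) ≤ q (x - y) := by

  classical
  intro x hx t
  choose I hIne hIideal hIq using fun (y : K) => hasym x hx y y.2
  set C : K → Set S := fun y => closure (I y) with hC
  have hCclosed : ∀ y, IsClosed (C y) := fun y => isClosed_closure
  have hCne : ∀ y, (C y).Nonempty := fun y => (hIne y).mono subset_closure
  have hCideal : ∀ y, ∀ s : S, ∀ a ∈ C y, s * a ∈ C y := by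
    intro y s a ha
    have h1 : (fun b => s * b) '' closure (I y) ⊆ closure ((fun b => s * b) '' I y) :=
      image_closure_subset_closure_image (hlc s)
    have h2 : closure ((fun b => s * b) '' I y) ⊆ closure (I y) := by
      apply closure_mono
      rintro _ ⟨b, hb, rfl⟩
      exact hIideal y s b hb
    exact h2 (h1 ⟨a, ha, rfl⟩)
  have hCq : ∀ y, ∀ u ∈ C y, q (act u x - act u ↑y) ≤ q (x - ↑y) := by
    intro y u hu
    have hclosedT : IsClosed {u : S | q (act u x - act u ↑y) ≤ q (x - ↑y)} := by
      apply isClosed_le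
      · exact hqc.comp ((hc1 x hx).sub (hc1 y y.2))
      · exact continuous_const
    exact hclosedT.closure_subset_iff.mpr (fun s hs => hIq y s hs) hu
  -- the closed left ideal generated by t
  set L : Set S := Set.range (fun s : S => s * t) ∪ {t} with hL
  have hLclosed : IsClosed L := ((isCompact_range (hrc t)).isClosed).union isClosed_singleton
  have hLne : L.Nonempty := ⟨t, Or.inr rfl⟩
  have hLideal : ∀ s : S, ∀ a ∈ L, s * a ∈ L := by
    rintro s a (⟨b, rfl⟩ | rfl)
    · exact Or.inl ⟨s * b, mul_assoc s b t⟩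
    · exact Or.inl ⟨s, rfl⟩
  -- finite intersections are nonempty
  have hfin : ∀ u : Finset K, (L ∩ ⋂ i ∈ u, C i).Nonempty ∧
      IsClosed (L ∩ ⋂ i ∈ u, C i) ∧ (∀ s : S, ∀ a ∈ L ∩ ⋂ i ∈ u, C i,
        s * a ∈ L ∩ ⋂ i ∈ u, C i) := by
    intro u
    induction u using Finset.induction_on with
    | empty =>
      simp only [Finset.notMem_empty, Set.iInter_of_empty, Set.iInter_univ, Set.inter_univ]
      exact ⟨hLne, hLclosed, hLideal⟩
    | @insert y u hy ih =>
      obtain ⟨hne, hcl, hid⟩ := ih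
      rw [Finset.set_biInter_insert, Set.inter_left_comm]
      refine ⟨?_, (hCclosed y).inter hcl, ?_⟩
      · exact hrev (C y) _ (hCne y) hne (hCclosed y) hcl (hCideal y) hid
      · rintro s a ⟨ha1, ha2⟩
        exact ⟨hCideal y s a ha1, hid s a ha2⟩
  have hcompact : IsCompact L := hLclosed.isCompact
  obtain ⟨w, hwL, hwC⟩ := hcompact.inter_iInter_nonempty C hCclosed (fun f => (hfin f).1)
  simp only [Set.mem_iInter] at hwC
  -- the ideal we need
  refine ⟨{s : S | ∀ y : K, s * t ∈ C y}, ?_, ?_, ?_⟩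
  · rcases hwL with ⟨s₀, hs₀⟩ | hw
    · refine ⟨s₀, fun y => ?_⟩
      show s₀ * t ∈ C y
      rw [show s₀ * t = w from hs₀]
      exact hwC y
    · have hwt : w = t := hw
      exact ⟨t, fun y => hCideal y t t (hwt ▸ hwC y)⟩
  · intro s a ha y
    have := hCideal y s (a * t) (ha y)
    rwa [← mul_assoc] at this
  · intro s hs y hy
    exact hCq ⟨y, hy⟩ (s * t) (hs ⟨y, hy⟩)
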